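/- Let P = (V_1,…,V_n) be a profile of strict weak orders on a candidate set C of size m, and for each i let X_i be the m × m 0/1 matrix with rows and columns indexed by C defined by X_i(a,b) = 0 if a ≻_i b and X_i(a,b) = 1 otherwise (i.e., if b ≻_i a or a ∼_i b). Let X be the row-wise concatenation of X_1,…,X_n. Then P is possibly single-peaked consistent (possibly single-peaked with respect to some axis) if and only if X has the consecutive ones property (there is a permutation of the columns such that in every row the 1-entries are consecutive). -/

import Mathlib

def VValley {C : Type*} (A V : C → C → Prop) : Prop :=
  ∃ c1 c2 c3 : C, A c1 c2 ∧ A c2 c3 ∧ V c1 c2 ∧ V c3 c2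

def UValley {C : Type*} (A V : C → C → Prop) : Prop :=
  ∃ a b c d : C, a ≠ b ∧ a ≠ c ∧ a ≠ d ∧ b ≠ c ∧ b ≠ d ∧ c ≠ d ∧
    A a b ∧ A b d ∧ A a c ∧ A c d ∧ V a b ∧ V d c

def Extends {C : Type*} (V T : C → C → Prop) : Prop :=
  ∀ x y, V x y → T x y

/-- `V` is a strict partial order: asymmetric and transitive. -/
def IsSPO {C : Type*} (V : C → C → Prop) : Prop :=
  (∀ x y, V x y → ¬ V y x) ∧ (∀ x y z, V x y → V y z → V x z)

/-- `V` is a strict weak order: a strict partial order with transitive incomparability. -/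
def IsSWO {C : Type*} (V : C → C → Prop) : Prop :=
  IsSPO V ∧ ∀ x y z, (¬ V x y ∧ ¬ V y x) → (¬ V y z ∧ ¬ V z y) → (¬ V x z ∧ ¬ V z x)

/-- `V` possibly single-peaked w.r.t. axis `A`: it extends to a total order with no v-valley. -/
def PossSP {C : Type*} (A V : C → C → Prop) : Prop :=
  ∃ T : C → C → Prop, IsStrictTotalOrder C T ∧ Extends V T ∧ ¬ VValley A T

section Aux

variable {C : Type*} {A V : C → C → Prop}

lemma swo_negtrans (hV : IsSWO V) {a b c : C} (hab : ¬ V a b) (hbc : ¬ V b c) : ¬ V a c := by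
  intro hac
  by_cases hba : V b a
  · exact hbc (hV.1.2 _ _ _ hba hac)
  by_cases hcb : V c b
  · exact hab (hV.1.2 _ _ _ hac hcb)
  exact (hV.2 a b c ⟨hab, hba⟩ ⟨hbc, hcb⟩).1 hac

lemma swo_irrefl (hV : IsSWO V) (a : C) : ¬ V a a := fun h => hV.1.1 _ _ h h

/-- Existence of an `A`-minimum of a nonempty finset. -/
lemma exists_A_min (hA : IsStrictTotalOrder C A) (S : Finset C) (hS : S.Nonempty) :
    ∃ l ∈ S, ∀ y ∈ S, y ≠ l → A l y := by
  classical
  induction S using Finset.induction_on with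
  | empty => exact absurd hS (by simp)
  | @insert a s ha ih =>
    rcases s.eq_empty_or_nonempty with rfl | hs
    · exact ⟨a, by simp, by simp⟩
    · obtain ⟨l, hl, hlmin⟩ := ih hs
      rcases (haveI := hA; trichotomous_of A a l) with h | h | h
      · refine ⟨a, Finset.mem_insert_self _ _, ?_⟩
        intro y hy hya
        rcases Finset.mem_insert.1 hy with rfl | hy
        · exact absurd rfl hya
        · rcases (haveI := hA; trichotomous_of A y l) with h2 | h2 | h2
          · exact absurd (hA.trans _ _ _ h2 (hlmin y hy (fun e => hA.irrefl l (e ▸ h2)))) (hA.irrefl y)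
          · exact h2 ▸ h
          · exact hA.trans _ _ _ h h2
      · subst h; exact absurd hl ha
      · refine ⟨l, Finset.mem_insert_of_mem hl, ?_⟩
        intro y hy hyl
        rcases Finset.mem_insert.1 hy with rfl | hy
        · exact h
        · exact hlmin y hy hyl

/-- Existence of an `A`-maximum of a nonempty finset. -/
lemma exists_A_max (hA : IsStrictTotalOrder C A) (S : Finset C) (hS : S.Nonempty) :
    ∃ r ∈ S, ∀ y ∈ S, y ≠ r → A y r := by
  have hA' : IsStrictTotalOrder C (fun x y => A y x) :=
    { trichotomous := fun a b hab hba => by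
        rcases (haveI := hA; trichotomous_of A a b) with h | h | h
        · exact absurd h hba
        · exact h
        · exact absurd h hab
      irrefl := hA.irrefl
      trans := fun a b c h1 h2 => hA.trans _ _ _ h2 h1 }
  exact exists_A_min hA' S hS

/-- If `V` has no v-valley w.r.t. `A`, then every nonempty finset has an element which is
`V`-minimal and an `A`-endpoint. -/
lemma exists_endpoint (hA : IsStrictTotalOrder C A) (hV : IsSWO V) (hnv : ¬ VValley A V)
    (S : Finset C) (hS : S.Nonempty) :
    ∃ z ∈ S, (∀ y ∈ S, ¬ V z y) ∧
      ((∀ y ∈ S, y ≠ z → A z y) ∨ (∀ y ∈ S, y ≠ z → A y z)) := by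
  obtain ⟨l, hl, hlmin⟩ := exists_A_min hA S hS
  obtain ⟨r, hr, hrmax⟩ := exists_A_max hA S hS
  by_cases h1 : ∀ y ∈ S, ¬ V l y
  · exact ⟨l, hl, h1, Or.inl hlmin⟩
  by_cases h2 : ∀ y ∈ S, ¬ V r y
  · exact ⟨r, hr, h2, Or.inr hrmax⟩
  exfalso
  push_neg at h1 h2
  obtain ⟨y1, hy1S, hy1⟩ := h1
  obtain ⟨y2, hy2S, hy2⟩ := h2
  -- derive a valley
  have key : ∀ w : C, w ∈ S → V l w → V r w → False := by
    intro w hwS hlw hrw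
    have hwl : w ≠ l := fun e => swo_irrefl hV l (e ▸ hlw)
    have hwr : w ≠ r := fun e => swo_irrefl hV r (e ▸ hrw)
    exact hnv ⟨l, w, r, hlmin w hwS hwl, hrmax w hwS hwr, hlw, hrw⟩
  by_cases hry1 : V r y1
  · exact key y1 hy1S hy1 hry1
  · -- ¬ V r y1, V r y2 ⟹ V y1 y2 ; then V l y2
    have hy1y2 : V y1 y2 := by
      by_contra h
      exact (swo_negtrans hV hry1 h) hy2
    have hly2 : V l y2 := hV.1.2 _ _ _ hy1 hy1y2
    exact key y2 hy2S hly2 hy2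

/-- Lists that are "good": each element does not `V`-beat any later element, and all
later elements lie on one `A`-side of it. -/
def Good (A V : C → C → Prop) : List C → Prop
  | [] => True
  | z :: l => (∀ y ∈ l, ¬ V z y) ∧ ((∀ y ∈ l, A z y) ∨ (∀ y ∈ l, A y z)) ∧ Good A V l

lemma exists_good (hA : IsStrictTotalOrder C A) (hV : IsSWO V) (hnv : ¬ VValley A V)
    (S : Finset C) : ∃ L : List C, Good A V L ∧ L.Nodup ∧ ∀ x, x ∈ L ↔ x ∈ S := by
  classical
  induction S using Finset.strongInductionOn with
  | _ S ih =>
    rcases S.eq_empty_or_nonempty with rfl | hS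
    · exact ⟨[], trivial, List.nodup_nil, by simp⟩
    obtain ⟨z, hzS, hzmin, hzside⟩ := exists_endpoint hA hV hnv S hS
    obtain ⟨L', hG', hN', hM'⟩ := ih (S.erase z) (Finset.erase_ssubset hzS)
    refine ⟨z :: L', ⟨?_, ?_, hG'⟩, ?_, ?_⟩
    · intro y hy
      exact hzmin y (Finset.mem_of_mem_erase ((hM' y).1 hy))
    · rcases hzside with h | h
      · exact Or.inl (fun y hy => h y (Finset.mem_of_mem_erase ((hM' y).1 hy))
          (Finset.ne_of_mem_erase ((hM' y).1 hy)))
      · exact Or.inr (fun y hy => h y (Finset.mem_of_mem_erase ((hM' y).1 hy))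
          (Finset.ne_of_mem_erase ((hM' y).1 hy)))
    · exact List.nodup_cons.2 ⟨fun h => (Finset.ne_of_mem_erase ((hM' z).1 h)) rfl, hN'⟩
    · intro x
      simp only [List.mem_cons, hM', Finset.mem_erase]
      constructor
      · rintro (rfl | ⟨_, h⟩)
        · exact hzS
        · exact h
      · intro hx
        by_cases hxz : x = z
        · exact Or.inl hxz
        · exact Or.inr ⟨hxz, hx⟩

open List in
lemma good_pair [DecidableEq C] :
    ∀ (L : List C), Good A V L → ∀ x y, x ∈ L → y ∈ L →
      L.idxOf x < L.idxOf y → ¬ V x y := by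
  intro L
  induction L with
  | nil => intro _ x y hx; exact absurd hx (by simp)
  | cons z l ih =>
    rintro ⟨h1, _, h3⟩ x y hx hy hlt
    by_cases hxz : x = z
    · subst hxz
      have hyz : y ≠ x := by
        rintro rfl; simp at hlt
      have : y ∈ l := (List.mem_cons.1 hy).resolve_left hyz
      exact h1 y this
    · have hx' : x ∈ l := (List.mem_cons.1 hx).resolve_left hxz
      have hyz : y ≠ z := by
        rintro rfl
        rw [List.idxOf_cons_self] at hlt
        omega
      have hy' : y ∈ l := (List.mem_cons.1 hy).resolve_left hyz
      have e1 : (z :: l).idxOf x = (l.idxOf x).succ := List.idxOf_cons_ne l (Ne.symm hxz)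
      have e2 : (z :: l).idxOf y = (l.idxOf y).succ := List.idxOf_cons_ne l (Ne.symm hyz)
      rw [e1, e2] at hlt
      exact ih h3 x y hx' hy' (Nat.succ_lt_succ_iff.1 hlt)

open List in
lemma good_triple [DecidableEq C] (hA : IsStrictTotalOrder C A) :
    ∀ (L : List C), Good A V L → ∀ x y w, x ∈ L → y ∈ L → w ∈ L →
      L.idxOf x < L.idxOf y → L.idxOf x < L.idxOf w →
      A y x → A x w → False := by
  intro L
  induction L with
  | nil => intro _ x y w hx; exact absurd hx (by simp)
  | cons z l ih =>
    rintro ⟨_, h2, h3⟩ x y w hx hy hw hlt1 hlt2 hAyx hAxw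
    by_cases hxz : x = z
    · subst hxz
      have hy' : y ∈ l := (List.mem_cons.1 hy).resolve_left (by rintro rfl; simp at hlt1)
      have hw' : w ∈ l := (List.mem_cons.1 hw).resolve_left (by rintro rfl; simp at hlt2)
      rcases h2 with h | h
      · exact absurd (hA.trans _ _ _ hAyx (h y hy')) (hA.irrefl y)
      · exact absurd (hA.trans _ _ _ hAxw (h w hw')) (hA.irrefl x)
    · have hx' : x ∈ l := (List.mem_cons.1 hx).resolve_left hxz
      have e1 : (z :: l).idxOf x = (l.idxOf x).succ := List.idxOf_cons_ne l (Ne.symm hxz)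
      have hyz : y ≠ z := by
        rintro rfl; rw [List.idxOf_cons_self] at hlt1; omega
      have hwz : w ≠ z := by
        rintro rfl; rw [List.idxOf_cons_self] at hlt2; omega
      have hy' : y ∈ l := (List.mem_cons.1 hy).resolve_left hyz
      have hw' : w ∈ l := (List.mem_cons.1 hw).resolve_left hwz
      have e2 : (z :: l).idxOf y = (l.idxOf y).succ := List.idxOf_cons_ne l (Ne.symm hyz)
      have e3 : (z :: l).idxOf w = (l.idxOf w).succ := List.idxOf_cons_ne l (Ne.symm hwz)
      rw [e1, e2] at hlt1; rw [e1, e3] at hlt2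
      exact ih h3 x y w hx' hy' hw' (Nat.succ_lt_succ_iff.1 hlt1)
        (Nat.succ_lt_succ_iff.1 hlt2) hAyx hAxw

/-- The main extension lemma: on a finite type, a strict weak order with no v-valley w.r.t. a
strict total axis extends to a strict total order with no v-valley. -/
lemma possSP_of_noValley [Fintype C] (hA : IsStrictTotalOrder C A) (hV : IsSWO V)
    (hnv : ¬ VValley A V) : PossSP A V := by
  classical
  obtain ⟨L, hG, hN, hM⟩ := exists_good hA hV hnv Finset.univ
  have hmem : ∀ x : C, x ∈ L := fun x => (hM x).2 (Finset.mem_univ x)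
  refine ⟨fun x y => L.idxOf y < L.idxOf x, ?_, ?_, ?_⟩
  · refine { trichotomous := ?_, irrefl := ?_, trans := ?_ }
    · intro a b hab hba
      rcases Nat.lt_trichotomy (L.idxOf a) (L.idxOf b) with h | h | h
      · exact absurd h hba
      · exact (List.idxOf_inj (hmem a)).1 h
      · exact absurd h hab
    · intro a; simp
    · intro a b c h1 h2; exact lt_trans h2 h1
  · intro x y hxy
    have hxyne : x ≠ y := fun e => swo_irrefl hV x (e ▸ hxy)
    rcases Nat.lt_trichotomy (L.idxOf y) (L.idxOf x) with h | h | h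
    · exact h
    · exact absurd ((List.idxOf_inj (hmem y)).1 h) (Ne.symm hxyne)
    · exact absurd hxy (good_pair L hG x y (hmem x) (hmem y) h)
  · rintro ⟨c1, c2, c3, hA12, hA23, hT12, hT32⟩
    exact good_triple hA L hG c2 c1 c3 (hmem c2) (hmem c1) (hmem c3) hT12 hT32 hA12 hA23

end Aux


theorem stmt19 {C : Type*} [Fintype C] (n : ℕ) (V : Fin n → C → C → Prop)
    (hV : ∀ i, IsSWO (V i)) :
    (∃ A : C → C → Prop, IsStrictTotalOrder C A ∧ ∀ i, PossSP A (V i)) ↔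
    (∃ σ : C ≃ Fin (Fintype.card C),
      ∀ i, ∀ a b1 b2 b3 : C, σ b1 < σ b2 → σ b2 < σ b3 →
        ¬ V i a b1 → ¬ V i a b3 → ¬ V i a b2) := by
  classical
  constructor
  · rintro ⟨A, hA, hPSP⟩
    have hnv : ∀ i, ¬ VValley A (V i) := by
      intro i
      obtain ⟨T, hT, hext, hTnv⟩ := hPSP i
      rintro ⟨c1, c2, c3, h1, h2, h3, h4⟩
      exact hTnv ⟨c1, c2, c3, h1, h2, hext _ _ h3, hext _ _ h4⟩
    letI := hA
    letI : DecidableRel A := fun a b => Classical.dec _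
    letI lo := linearOrderOfSTO A
    let e : Fin (Fintype.card C) ≃o C := monoEquivOfFin C rfl
    refine ⟨e.symm.toEquiv, ?_⟩
    intro i a b1 b2 b3 h12 h23 hb1 hb3 hb2
    have hA12 : A b1 b2 := (OrderIso.lt_iff_lt e.symm).1 h12
    have hA23 : A b2 b3 := (OrderIso.lt_iff_lt e.symm).1 h23
    have hV12 : V i b1 b2 := by
      by_contra h
      exact (swo_negtrans (hV i) hb1 h) hb2
    have hV32 : V i b3 b2 := by
      by_contra h
      exact (swo_negtrans (hV i) hb3 h) hb2
    exact hnv i ⟨b1, b2, b3, hA12, hA23, hV12, hV32⟩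
  · rintro ⟨σ, hσ⟩
    set A : C → C → Prop := fun x y => σ x < σ y with hAdef
    have hA : IsStrictTotalOrder C A :=
      { trichotomous := fun a b hab hba => by
          rcases lt_trichotomy (σ a) (σ b) with h | h | h
          · exact absurd h hab
          · exact σ.injective h
          · exact absurd h hba
        irrefl := fun a => lt_irrefl _
        trans := fun a b c h1 h2 => lt_trans h1 h2 }
    refine ⟨A, hA, fun i => possSP_of_noValley hA (hV i) ?_⟩
    rintro ⟨c1, c2, c3, h12, h23, hv12, hv32⟩
    by_cases h13 : V i c1 c3
    · exact (hσ i c3 c1 c2 c3 h12 h23 ((hV i).1.1 _ _ h13) (swo_irrefl (hV i) c3)) hv32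
    · exact (hσ i c1 c1 c2 c3 h12 h23 (swo_irrefl (hV i) c1) h13) hv12
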